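/- Let q > 0, let P be a real symmetric n×n matrix with P ⪰ q·I_n, let R be a real symmetric positive definite p×p matrix, and let C be a real p×n matrix. Define S = C P Cᵀ + R (which is positive definite) and K = P Cᵀ S⁻¹. Then KᵀK ⪰ κ·I_p in the Loewner order with κ = q²·λ_min(C Cᵀ)/(λ_max(S))². In particular, if C has full row rank then κ > 0. -/

import Mathlib

open Matrix

section KalmanAux
variable {m : ℕ}

lemma aux_smul_psd {A : Matrix (Fin m) (Fin m) ℝ} (hA : A.PosSemidef) {c : ℝ}
    (hc : 0 ≤ c) : (c • A).PosSemidef := by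
  constructor
  · unfold Matrix.IsHermitian
    rw [conjTranspose_smul, hA.1.eq]
    simp
  · intro x
    exact (hA.smul hc).2 x

lemma aux_conj_psd {A : Matrix (Fin m) (Fin m) ℝ} (hA : A.IsHermitian) (f : Fin m → ℝ)
    (hf : ∀ i, 0 ≤ f i) :
    (((hA.eigenvectorUnitary : Matrix (Fin m) (Fin m) ℝ)) * diagonal f *
      star ((hA.eigenvectorUnitary : Matrix (Fin m) (Fin m) ℝ))).PosSemidef := by
  rw [Matrix.star_eq_conjTranspose]
  exact (posSemidef_diagonal_iff.mpr hf).mul_mul_conjTranspose_same _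

lemma aux_shift_psd {A : Matrix (Fin m) (Fin m) ℝ} (hA : A.IsHermitian) {c : ℝ}
    (h : ∀ i, c ≤ hA.eigenvalues i) : (A - c • 1).PosSemidef := by
  set U := (hA.eigenvectorUnitary : Matrix (Fin m) (Fin m) ℝ) with hUdef
  have hU : U * star U = 1 := (Matrix.mem_unitaryGroup_iff).mp hA.eigenvectorUnitary.2
  have key : A - c • 1 = U * diagonal (fun i => hA.eigenvalues i - c) * star U := by
    have hd : diagonal (fun i => hA.eigenvalues i - c) =
        diagonal (RCLike.ofReal ∘ hA.eigenvalues) - c • (1 : Matrix (Fin m) (Fin m) ℝ) := by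
      rw [smul_one_eq_diagonal, ← diagonal_sub]
      simp [Function.comp]
    rw [hd, Matrix.mul_sub, Matrix.sub_mul]
    conv_lhs => rw [hA.spectral_theorem]
    rw [Unitary.conjStarAlgAut_apply, Matrix.mul_smul,
      Matrix.smul_mul, mul_one, hU]
  rw [key]
  exact aux_conj_psd hA _ (fun i => sub_nonneg.2 (h i))

lemma aux_inv_sq {S : Matrix (Fin m) (Fin m) ℝ} (hS : S.PosDef) {c : ℝ} (hc : 0 < c)
    (h : ∀ i, hS.1.eigenvalues i ≤ c) :
    (S⁻¹ * S⁻¹ - (c ^ 2)⁻¹ • 1).PosSemidef := by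
  obtain ⟨ev, hev⟩ : ∃ ev : Fin m → ℝ, ev = hS.1.eigenvalues := ⟨_, rfl⟩
  set U := (hS.1.eigenvectorUnitary : Matrix (Fin m) (Fin m) ℝ) with hUdef
  have hU : U * star U = 1 := (Matrix.mem_unitaryGroup_iff).mp hS.1.eigenvectorUnitary.2
  have hU' : star U * U = 1 := (Matrix.mem_unitaryGroup_iff').mp hS.1.eigenvectorUnitary.2
  have cancel : ∀ X : Matrix (Fin m) (Fin m) ℝ, star U * (U * X) = X := fun X => by
    rw [← Matrix.mul_assoc, hU', one_mul]
  have hpos : ∀ i, 0 < ev i := by rw [hev]; exact hS.eigenvalues_pos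
  have h' : ∀ i, ev i ≤ c := by rw [hev]; exact h
  have hspec : S = U * diagonal ev * star U := by
    have := hS.1.spectral_theorem
    rw [Unitary.conjStarAlgAut_apply] at this
    rw [hev]; exact this.trans rfl
  have hSinv : S⁻¹ = U * diagonal (fun i => (ev i)⁻¹) * star U := by
    apply inv_eq_right_inv
    rw [hspec]
    simp only [Matrix.mul_assoc, cancel]
    rw [← Matrix.mul_assoc (diagonal ev), diagonal_mul_diagonal]
    have : (fun i => ev i * (ev i)⁻¹) = fun _ => (1 : ℝ) := by
      funext i; exact mul_inv_cancel₀ (hpos i).ne'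
    rw [this, diagonal_one, one_mul, hU]
  have key : S⁻¹ * S⁻¹ - (c ^ 2)⁻¹ • 1 =
      U * diagonal (fun i => (ev i)⁻¹ * (ev i)⁻¹ - (c ^ 2)⁻¹) * star U := by
    have hd : diagonal (fun i => (ev i)⁻¹ * (ev i)⁻¹ - (c ^ 2)⁻¹) =
        diagonal (fun i => (ev i)⁻¹) * diagonal (fun i => (ev i)⁻¹)
          - (c ^ 2)⁻¹ • (1 : Matrix (Fin m) (Fin m) ℝ) := by
      rw [smul_one_eq_diagonal, diagonal_mul_diagonal, ← diagonal_sub]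
    rw [hd, Matrix.mul_sub, Matrix.sub_mul, Matrix.mul_smul, Matrix.smul_mul, mul_one, hU, hSinv]
    congr 1
    simp only [Matrix.mul_assoc, cancel]
  rw [key, Matrix.star_eq_conjTranspose]
  refine (posSemidef_diagonal_iff.mpr (fun i => ?_)).mul_mul_conjTranspose_same _
  have h1 : (0:ℝ) < ev i := hpos i
  have : (c ^ 2)⁻¹ ≤ (ev i)⁻¹ * (ev i)⁻¹ := by
    rw [← mul_inv]
    apply inv_anti₀ (by positivity)
    calc ev i * ev i ≤ c * c := mul_le_mul (h' i) (h' i) h1.le hc.le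
    _ = c ^ 2 := (sq c).symm
  linarith

end KalmanAux

/-- Kalman-gain lower bound: if `P ⪰ q·I` with `q > 0`, `R` is positive definite,
`S = C P Cᵀ + R` and `K = P Cᵀ S⁻¹`, then `S` is positive definite and
`KᵀK ⪰ κ·I` with `κ = q²·λ_min(CCᵀ)/λ_max(S)²`; if `C` has full row rank then `κ > 0`. -/
theorem kalman_gain_lower_bound
    {n p : ℕ} (hp : 0 < p) (q : ℝ) (hq : 0 < q)
    (P : Matrix (Fin n) (Fin n) ℝ) (hP : (P - q • 1).PosSemidef)
    (R : Matrix (Fin p) (Fin p) ℝ) (hR : R.PosDef)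
    (C : Matrix (Fin p) (Fin n) ℝ) :
    (C * P * Cᵀ + R).PosDef ∧
    ((P * Cᵀ * (C * P * Cᵀ + R)⁻¹)ᵀ * (P * Cᵀ * (C * P * Cᵀ + R)⁻¹) -
      (q ^ 2 * sInf (spectrum ℝ (C * Cᵀ)) /
        (sSup (spectrum ℝ (C * P * Cᵀ + R))) ^ 2) • 1).PosSemidef ∧
    (C.rank = p →
      0 < q ^ 2 * sInf (spectrum ℝ (C * Cᵀ)) /
        (sSup (spectrum ℝ (C * P * Cᵀ + R))) ^ 2) := by
  haveI : Nonempty (Fin p) := Fin.pos_iff_nonempty.mp hp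
  have hPh : P.IsHermitian := by
    have h1 : ((q:ℝ) • (1 : Matrix (Fin n) (Fin n) ℝ)).IsHermitian := by
      unfold Matrix.IsHermitian; rw [conjTranspose_smul]; simp
    simpa using hP.1.add h1
  have hPsd : P.PosSemidef := by
    have h1 : ((q:ℝ) • (1 : Matrix (Fin n) (Fin n) ℝ)).PosSemidef :=
      aux_smul_psd Matrix.PosSemidef.one hq.le
    simpa using hP.add h1
  have hCt : Cᴴ = Cᵀ := conjTranspose_eq_transpose_of_trivial C
  have hCPC : (C * P * Cᵀ).PosSemidef := by
    rw [← hCt]; exact hPsd.mul_mul_conjTranspose_same C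
  have hS : (C * P * Cᵀ + R).PosDef := Matrix.PosDef.posSemidef_add hCPC hR
  set S := C * P * Cᵀ + R with hSdef
  have hCC : (C * Cᵀ).PosSemidef := by
    rw [← hCt]; exact posSemidef_self_mul_conjTranspose C
  -- spectrum facts
  set μ := sInf (spectrum ℝ (C * Cᵀ)) with hμdef
  set σ := sSup (spectrum ℝ S) with hσdef
  have hspecCC : spectrum ℝ (C * Cᵀ) = Set.range hCC.1.eigenvalues :=
    Matrix.IsHermitian.spectrum_real_eq_range_eigenvalues hCC.1
  have hspecS : spectrum ℝ S = Set.range hS.1.eigenvalues :=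
    Matrix.IsHermitian.spectrum_real_eq_range_eigenvalues hS.1
  have hμ_le : ∀ i, μ ≤ hCC.1.eigenvalues i := fun i => by
    rw [hμdef, hspecCC]
    exact csInf_le (Set.finite_range _).bddBelow ⟨i, rfl⟩
  have hμ_mem : ∃ j, hCC.1.eigenvalues j = μ := by
    have : μ ∈ spectrum ℝ (C * Cᵀ) := by
      rw [hμdef]
      refine Set.Nonempty.csInf_mem ?_ (by rw [hspecCC]; exact Set.finite_range _)
      rw [hspecCC]; exact Set.range_nonempty _
    rw [hspecCC] at this; obtain ⟨j, hj⟩ := this; exact ⟨j, hj⟩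
  have hμ_nonneg : 0 ≤ μ := by
    obtain ⟨j, hj⟩ := hμ_mem
    rw [← hj]; exact hCC.eigenvalues_nonneg j
  have hσ_ge : ∀ i, hS.1.eigenvalues i ≤ σ := fun i => by
    rw [hσdef, hspecS]
    exact le_csSup (Set.finite_range _).bddAbove ⟨i, rfl⟩
  have hσ_pos : 0 < σ :=
    lt_of_lt_of_le (hS.eigenvalues_pos (Classical.arbitrary (Fin p))) (hσ_ge _)
  -- main chain
  have h1 : (P * P - q ^ 2 • (1 : Matrix (Fin n) (Fin n) ℝ)).PosSemidef := by
    have e : P * P - q ^ 2 • (1 : Matrix (Fin n) (Fin n) ℝ) =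
        (P - q • 1)ᴴ * (P - q • 1) + (2 * q) • (P - q • 1) := by
      rw [hP.1.eq]
      simp only [Matrix.sub_mul, Matrix.mul_sub, Matrix.smul_mul, Matrix.mul_smul,
        Matrix.mul_one, Matrix.one_mul, smul_smul, smul_sub, pow_two]
      module
    rw [e]
    exact (posSemidef_conjTranspose_mul_self _).add (aux_smul_psd hP (by linarith))
  have h2 : (C * (P * P - q ^ 2 • 1) * Cᵀ).PosSemidef := by
    rw [← hCt]; exact h1.mul_mul_conjTranspose_same C
  have h3 : (C * Cᵀ - μ • 1).PosSemidef := aux_shift_psd hCC.1 hμ_le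
  have hSinvH : (S⁻¹).IsHermitian := hS.1.inv
  have h4 : (S⁻¹ * S⁻¹ - (σ ^ 2)⁻¹ • 1).PosSemidef := aux_inv_sq hS hσ_pos hσ_ge
  have hT1 : (S⁻¹ * ((C * (P * P - q ^ 2 • 1) * Cᵀ) + q ^ 2 • (C * Cᵀ - μ • 1)) * S⁻¹).PosSemidef := by
    have inner := h2.add (aux_smul_psd h3 (c := q ^ 2) (by positivity))
    have := inner.mul_mul_conjTranspose_same S⁻¹
    rwa [hSinvH.eq] at this
  have hT2 : ((q ^ 2 * μ) • (S⁻¹ * S⁻¹ - (σ ^ 2)⁻¹ • 1)).PosSemidef :=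
    aux_smul_psd h4 (c := q ^ 2 * μ) (by positivity)
  have hsum := hT1.add hT2
  refine ⟨hS, ?_, ?_⟩
  · have etr : (P * Cᵀ * S⁻¹)ᵀ = S⁻¹ * C * P := by
      have h5 : (S⁻¹)ᵀ = S⁻¹ := by
        rw [← conjTranspose_eq_transpose_of_trivial, hSinvH.eq]
      have h6 : Pᵀ = P := by
        rw [← conjTranspose_eq_transpose_of_trivial, hPh.eq]
      rw [transpose_mul, transpose_mul, transpose_transpose, h5, h6, Matrix.mul_assoc]
    have key : (P * Cᵀ * S⁻¹)ᵀ * (P * Cᵀ * S⁻¹) - (q ^ 2 * μ / σ ^ 2) • 1 =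
        S⁻¹ * ((C * (P * P - q ^ 2 • 1) * Cᵀ) + q ^ 2 • (C * Cᵀ - μ • 1)) * S⁻¹ +
          (q ^ 2 * μ) • (S⁻¹ * S⁻¹ - (σ ^ 2)⁻¹ • 1) := by
      rw [etr, div_eq_mul_inv]
      simp only [Matrix.mul_sub, Matrix.sub_mul, Matrix.mul_add, Matrix.add_mul,
        Matrix.mul_smul, Matrix.smul_mul, Matrix.mul_one, Matrix.one_mul, smul_smul,
        smul_sub, smul_add, Matrix.mul_assoc]
      module
    rw [key]
    exact hsum
  · intro hrank
    have hrankCC : (C * Cᵀ).rank = p := by rw [rank_self_mul_transpose, hrank]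
    have hall : ∀ i, hCC.1.eigenvalues i ≠ 0 := by
      intro i hi
      have hcard := hCC.1.rank_eq_card_non_zero_eigs
      rw [hrankCC] at hcard
      have hlt : Fintype.card {j // hCC.1.eigenvalues j ≠ 0} < Fintype.card (Fin p) :=
        Fintype.card_subtype_lt (x := i) (by simpa using hi)
      rw [Fintype.card_fin] at hlt
      omega
    have hμpos : 0 < μ := by
      obtain ⟨j, hj⟩ := hμ_mem
      rcases (hCC.eigenvalues_nonneg j).lt_or_eq with h | h
      · rwa [← hj]
      · exact absurd h.symm (hall j)
    exact div_pos (by positivity) (by positivity)
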